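/- Let p be a prime and let Q be the group of order p^4 with presentation ⟨x,y,z | x^{p^2} = y^p = z^p = [x,y] = [x,z] = 1, [y,z] = x^p⟩. Then every subgroup H of Q not containing the central element x^p has order at most p, and consequently the minimal faithful permutation degree of Q is p^3. -/

import Mathlib

private lemma comm_of_pcomm' {G : Type*} [Group G] {a b c : G} (h : a⁻¹ * b⁻¹ * a * b = c) :
    a * b = b * a * c := by
  rw [← h]; group

private lemma commute_of_pcomm {G : Type*} [Group G] {a b : G} (h : a⁻¹ * b⁻¹ * a * b = 1) :
    Commute a b := by
  have h2 := comm_of_pcomm' h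
  rwa [mul_one] at h2

private lemma bezout_mem {G : Type*} [Group G] {p : ℕ} (hp : p.Prime) {t : G}
    (ht : orderOf t = p) {k : ℤ} (hk : t ^ k ≠ 1) : t ∈ Subgroup.zpowers (t ^ k) := by
  have hpk : ¬((p : ℤ) ∣ k) := by
    intro hd
    exact hk (orderOf_dvd_iff_zpow_eq_one.mp (ht ▸ hd))
  have hco : IsCoprime k (p : ℤ) := by
    rw [Int.isCoprime_iff_gcd_eq_one]
    have h1 : ¬ p ∣ k.natAbs := by
      intro h; exact hpk (Int.dvd_natAbs.mp (Int.natCast_dvd_natCast.mpr h))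
    have := (Nat.Prime.coprime_iff_not_dvd hp).mpr h1
    simpa [Int.gcd, Nat.coprime_comm] using this.symm
  obtain ⟨u, v, huv⟩ := hco
  refine Subgroup.mem_zpowers_iff.mpr ⟨u, ?_⟩
  have htp : t ^ (p : ℤ) = 1 := by
    rw [zpow_natCast, ← ht, pow_orderOf_eq_one]
  have h2 : t ^ (v * (p:ℤ)) = 1 := by
    rw [show v * (p:ℤ) = (p:ℤ) * v by ring, zpow_mul, htp, one_zpow]
  calc (t ^ k) ^ u = t ^ (u * k) := by rw [← zpow_mul, mul_comm]
    _ = t ^ (u * k) * t ^ (v * (p:ℤ)) := by rw [h2, mul_one]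
    _ = t ^ (u * k + v * (p:ℤ)) := by rw [← zpow_add]
    _ = t := by rw [huv, zpow_one]

private lemma pow_p_mem_zpowers {G : Type*} [Group G] {p : ℕ} (hp : p.Prime) {x : G}
    (hord : orderOf x = p ^ 2) {a : ℤ} (ha : x ^ a ≠ 1) :
    x ^ p ∈ Subgroup.zpowers (x ^ a) := by
  set P2 : ℤ := ((p ^ 2 : ℕ) : ℤ) with hP2
  have hx2 : x ^ P2 = 1 := by
    rw [hP2, zpow_natCast, ← hord, pow_orderOf_eq_one]
  have key : ∀ A C : ℤ, x ^ (A - P2 * C) = x ^ A := by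
    intro A C
    rw [zpow_sub, zpow_mul, hx2, one_zpow, inv_one, mul_one]
  set d : ℕ := Int.gcd a P2 with hd
  have hdvd2 : d ∣ p ^ 2 := by
    have h0 := Int.gcd_dvd_right (a := a) (b := P2)
    rw [hP2] at h0
    rw [hd]
    exact_mod_cast h0
  obtain ⟨i, hi2, hie⟩ := (Nat.dvd_prime_pow hp).mp hdvd2
  have hine : i ≠ 2 := by
    rintro rfl
    apply ha
    have hda : (d : ℤ) ∣ a := Int.gcd_dvd_left a P2
    rw [hie] at hda
    obtain ⟨e, he⟩ := hda
    have : x ^ a = x ^ ((0 : ℤ) - P2 * (-e)) := by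
      rw [he]; congr 1; rw [hP2]; push_cast; ring
    rw [this, key, zpow_zero]
  have hdp : d ∣ p := by
    rw [hie]
    have : p ^ i ∣ p ^ 1 := pow_dvd_pow p (by omega)
    simpa using this
  obtain ⟨e, he⟩ := hdp
  have hbez : (d : ℤ) = a * Int.gcdA a P2 + P2 * Int.gcdB a P2 := Int.gcd_eq_gcd_ab a P2
  set u := Int.gcdA a P2
  set v := Int.gcdB a P2
  refine Subgroup.mem_zpowers_iff.mpr ⟨u * e, ?_⟩
  have h2 : (d : ℤ) * e = (p : ℤ) := by exact_mod_cast congrArg (Nat.cast : ℕ → ℤ) he.symm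
  have hae : a * (u * e) = (p : ℤ) - P2 * (v * e) := by
    calc a * (u * e) = ((d:ℤ) - P2 * v) * e := by rw [hbez]; ring
      _ = (p : ℤ) - P2 * (v * e) := by rw [← h2]; ring
  calc (x ^ a) ^ (u * (e:ℤ)) = x ^ (a * (u * e)) := by rw [← zpow_mul]
    _ = x ^ ((p:ℤ) - P2 * (v * e)) := by rw [hae]
    _ = x ^ ((p:ℤ)) := key _ _
    _ = x ^ p := zpow_natCast x p

/-- The minimal faithful permutation degree of a group: the least `n` such that
the group embeds into `Equiv.Perm (Fin n)`. -/
noncomputable def minFaithfulDegree (G : Type*) [Group G] : ℕ :=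
  sInf {n : ℕ | ∃ f : G →* Equiv.Perm (Fin n), Function.Injective f}

/-- The commutator `a⁻¹ * b⁻¹ * a * b`. -/
def pcomm {G : Type*} [Group G] (a b : G) : G := a⁻¹ * b⁻¹ * a * b

theorem Qp_subgroups_and_degree (p : ℕ) (hp : p.Prime)
    (Q : Type*) [Group Q] [Finite Q] (x y z : Q)
    (hgen : Subgroup.closure {x, y, z} = ⊤) (hcard : Nat.card Q = p ^ 4)
    (hx : x ^ p ^ 2 = 1) (hy : y ^ p = 1) (hz : z ^ p = 1)
    (hxy : pcomm x y = 1) (hxz : pcomm x z = 1) (hyz : pcomm y z = x ^ p) :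
    (∀ H : Subgroup Q, x ^ p ∉ H → Nat.card H ≤ p) ∧
    minFaithfulDegree Q = p ^ 3 := by
  haveI : Fact p.Prime := ⟨hp⟩
  set t : Q := x ^ p with htdef
  -- x commutes with everything
  have hxg : ∀ g : Q, Commute x g := by
    intro g
    have hg : g ∈ Subgroup.closure ({x, y, z} : Set Q) := hgen ▸ Subgroup.mem_top g
    induction hg using Subgroup.closure_induction with
    | mem w hw =>
      rcases hw with h | h | h
      · rw [h]
      · rw [h]; exact commute_of_pcomm hxy
      · rw [h]; exact commute_of_pcomm hxz
    | one => exact Commute.one_right x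
    | mul a b _ _ ha hb => exact ha.mul_right hb
    | inv a _ ha => exact ha.inv_right
  have htg : ∀ g : Q, Commute t g := fun g => (hxg g).pow_left p
  have htq : ∀ (k : ℤ) (g : Q), t ^ k * g = g * t ^ k := fun k g => ((htg g).zpow_left k).eq
  have hyz' : y * z = z * y * t := comm_of_pcomm' hyz
  -- the universal commutation relation
  have Rall : ∀ g h : Q, ∃ k : ℤ, g * h = h * g * t ^ k := by
    have Rsymm : ∀ g h : Q, (∃ k : ℤ, g * h = h * g * t ^ k) →
        ∃ k : ℤ, h * g = g * h * t ^ k := by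
      rintro g h ⟨k, hk⟩
      refine ⟨-k, ?_⟩
      rw [hk, mul_assoc, ← zpow_add, add_neg_cancel, zpow_zero, mul_one]
    have Rmul : ∀ g g' h : Q, (∃ k : ℤ, g * h = h * g * t ^ k) →
        (∃ k : ℤ, g' * h = h * g' * t ^ k) →
        ∃ k : ℤ, (g * g') * h = h * (g * g') * t ^ k := by
      rintro g g' h ⟨k, hk⟩ ⟨k', hk'⟩
      refine ⟨k + k', ?_⟩
      calc g * g' * h = g * (h * g' * t ^ k') := by rw [mul_assoc, hk']
        _ = (g * h) * (g' * t ^ k') := by group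
        _ = (h * g * t ^ k) * (g' * t ^ k') := by rw [hk]
        _ = h * g * (t ^ k * g') * t ^ k' := by group
        _ = h * g * (g' * t ^ k) * t ^ k' := by rw [htq]
        _ = h * (g * g') * (t ^ k * t ^ k') := by group
        _ = h * (g * g') * t ^ (k + k') := by rw [zpow_add]
    have Rinv : ∀ g h : Q, (∃ k : ℤ, g * h = h * g * t ^ k) →
        ∃ k : ℤ, g⁻¹ * h = h * g⁻¹ * t ^ k := by
      rintro g h ⟨k, hk⟩
      refine ⟨-k, ?_⟩
      calc g⁻¹ * h = g⁻¹ * ((h * g * t ^ k) * t ^ (-k) * g⁻¹) := by group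
        _ = g⁻¹ * ((g * h) * t ^ (-k) * g⁻¹) := by rw [← hk]
        _ = h * (t ^ (-k) * g⁻¹) := by group
        _ = h * (g⁻¹ * t ^ (-k)) := by rw [htq]
        _ = h * g⁻¹ * t ^ (-k) := by group
    have Rone : ∀ h : Q, ∃ k : ℤ, (1 : Q) * h = h * 1 * t ^ k :=
      fun h => ⟨0, by simp⟩
    -- relations of generators with everything
    have hRy : ∀ h : Q, ∃ k : ℤ, y * h = h * y * t ^ k := by
      intro h
      have hh : h ∈ Subgroup.closure ({x, y, z} : Set Q) := hgen ▸ Subgroup.mem_top h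
      induction hh using Subgroup.closure_induction with
      | mem w hw =>
        rcases hw with h | h | h
        · rw [h]; exact ⟨0, by simp [((hxg y).symm).eq]⟩
        · rw [h]; exact ⟨0, by simp⟩
        · rw [h]; exact ⟨1, by simpa using hyz'⟩
      | one => exact Rsymm _ _ (Rone y)
      | mul a b _ _ ha hb => exact Rsymm _ _ (Rmul a b y (Rsymm _ _ ha) (Rsymm _ _ hb))
      | inv a _ ha => exact Rsymm _ _ (Rinv a y (Rsymm _ _ ha))
    have hRz : ∀ h : Q, ∃ k : ℤ, z * h = h * z * t ^ k := by
      intro h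
      have hh : h ∈ Subgroup.closure ({x, y, z} : Set Q) := hgen ▸ Subgroup.mem_top h
      induction hh using Subgroup.closure_induction with
      | mem w hw =>
        rcases hw with h | h | h
        · rw [h]; exact ⟨0, by simp [((hxg z).symm).eq]⟩
        · rw [h]; exact Rsymm _ _ ⟨1, by simpa using hyz'⟩
        · rw [h]; exact ⟨0, by simp⟩
      | one => exact Rsymm _ _ (Rone z)
      | mul a b _ _ ha hb => exact Rsymm _ _ (Rmul a b z (Rsymm _ _ ha) (Rsymm _ _ hb))
      | inv a _ ha => exact Rsymm _ _ (Rinv a z (Rsymm _ _ ha))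
    have hRx : ∀ h : Q, ∃ k : ℤ, x * h = h * x * t ^ k :=
      fun h => ⟨0, by simp [(hxg h).eq]⟩
    intro g h
    have hg : g ∈ Subgroup.closure ({x, y, z} : Set Q) := hgen ▸ Subgroup.mem_top g
    induction hg using Subgroup.closure_induction with
    | mem w hw =>
      rcases hw with he | he | he
      · rw [he]; exact hRx h
      · rw [he]; exact hRy h
      · rw [he]; exact hRz h
    | one => exact Rone h
    | mul a b _ _ ha hb => exact Rmul a b h ha hb
    | inv a _ ha => exact Rinv a h ha
  have htp1 : t ^ p = 1 := by
    rw [htdef, ← pow_mul, ← pow_two]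
    exact hx
  -- Part 1
  have part1 : ∀ H : Subgroup Q, t ∉ H → Nat.card H ≤ p := by
    intro H htH
    have htne : t ≠ 1 := fun h => htH (h ▸ H.one_mem)
    have hordt : orderOf t = p := orderOf_eq_prime htp1 htne
    have hcommH : ∀ a ∈ H, ∀ b ∈ H, Commute a b := by
      intro a ha b hb
      obtain ⟨k, hk⟩ := Rall a b
      by_cases hk1 : t ^ k = 1
      · show a * b = b * a
        rw [hk, hk1, mul_one]
      · exfalso
        have htkH : t ^ k ∈ H := by
          have he : t ^ k = (b * a)⁻¹ * (a * b) := by rw [hk]; group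
          rw [he]
          exact H.mul_mem (H.inv_mem (H.mul_mem hb ha)) (H.mul_mem ha hb)
        exact htH (Subgroup.zpowers_le.mpr htkH (bezout_mem hp hordt hk1))
    have hordx : orderOf x = p ^ 2 := by
      have hdvd : orderOf x ∣ p ^ 2 := orderOf_dvd_of_pow_eq_one hx
      obtain ⟨i, hi2, hoi⟩ := (Nat.dvd_prime_pow hp).mp hdvd
      rcases Nat.lt_or_ge i 2 with hlt | hge
      · exfalso
        apply htne
        have : orderOf x ∣ p := by
          rw [hoi]
          have : p ^ i ∣ p ^ 1 := pow_dvd_pow p (by omega)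
          simpa using this
        rw [htdef]
        exact orderOf_dvd_iff_pow_eq_one.mp this
      · rw [hoi, Nat.le_antisymm hi2 hge]
    have hxtriv : ∀ g ∈ H, g ∈ Subgroup.zpowers x → g = 1 := by
      intro g hgH hgx
      by_contra hg1
      obtain ⟨a, ha⟩ := Subgroup.mem_zpowers_iff.mp hgx
      have hane : x ^ a ≠ 1 := ha ▸ hg1
      have hmem : t ∈ Subgroup.zpowers (x ^ a) := pow_p_mem_zpowers hp hordx hane
      rw [ha] at hmem
      exact htH (Subgroup.zpowers_le.mpr hgH hmem)
    set Zx : Subgroup Q := Subgroup.zpowers x with hZx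
    haveI : Zx.Normal := by
      constructor
      intro n hn g
      obtain ⟨k, hk⟩ := Subgroup.mem_zpowers_iff.mp hn
      have hc : x ^ k * g = g * x ^ k := ((hxg g).zpow_left k).eq
      have : g * n * g⁻¹ = x ^ k := by rw [← hk, ← hc]; group
      rw [this]
      exact Subgroup.mem_zpowers_iff.mpr ⟨k, rfl⟩
    set φ : H →* Q ⧸ Zx := (QuotientGroup.mk' Zx).comp H.subtype with hφ
    have hφinj : Function.Injective φ := by
      rw [injective_iff_map_eq_one]
      intro h hh
      have h1 : (h : Q) ∈ Zx := (QuotientGroup.eq_one_iff _).mp hh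
      exact Subtype.ext (hxtriv _ h.2 h1)
    have hcardquot : Nat.card (Q ⧸ Zx) = p ^ 2 := by
      have h0 := Subgroup.card_eq_card_quotient_mul_card_subgroup Zx
      rw [Nat.card_zpowers, hordx, hcard] at h0
      have hp2 : 0 < p ^ 2 := pow_pos hp.pos 2
      exact Nat.eq_of_mul_eq_mul_right hp2 (h0.symm.trans (by ring))
    have hrange : Nat.card H = Nat.card φ.range :=
      Nat.card_congr (MonoidHom.ofInjective hφinj).toEquiv
    have hdvd : Nat.card φ.range ∣ p ^ 2 :=
      hcardquot ▸ Subgroup.card_subgroup_dvd_card φ.range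
    have hne : Nat.card φ.range ≠ p ^ 2 := by
      intro he
      have htop : φ.range = ⊤ :=
        Subgroup.eq_top_of_card_eq _ (he.trans hcardquot.symm)
      have hsurj : Function.Surjective φ := MonoidHom.range_eq_top.mp htop
      obtain ⟨hy', hy'eq⟩ := hsurj (QuotientGroup.mk' Zx y)
      obtain ⟨hz', hz'eq⟩ := hsurj (QuotientGroup.mk' Zx z)
      have hy'eq2 : QuotientGroup.mk' Zx (hy' : Q) = QuotientGroup.mk' Zx y := hy'eq
      have hz'eq2 : QuotientGroup.mk' Zx (hz' : Q) = QuotientGroup.mk' Zx z := hz'eq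
      obtain ⟨w, hwZx, hwy⟩ := (QuotientGroup.mk'_eq_mk' Zx).mp hy'eq2
      obtain ⟨w', hw'Zx, hw'z⟩ := (QuotientGroup.mk'_eq_mk' Zx).mp hz'eq2
      obtain ⟨a, haw⟩ := Subgroup.mem_zpowers_iff.mp hwZx
      obtain ⟨b, hbw⟩ := Subgroup.mem_zpowers_iff.mp hw'Zx
      have hcyz : Commute y z := by
        rw [← hwy, ← hw'z, ← haw, ← hbw]
        have c1 : Commute (hy' : Q) (hz' : Q) := hcommH _ hy'.2 _ hz'.2
        have c2 : Commute (hy' : Q) (x ^ b) := ((hxg (hy' : Q)).zpow_left b).symm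
        have c3 : Commute (x ^ a) (hz' : Q) := (hxg (hz' : Q)).zpow_left a
        have c4 : Commute (x ^ a) (x ^ b) := ((Commute.refl x).zpow_left a).zpow_right b
        exact (c1.mul_right c2).mul_left (c3.mul_right c4)
      have : t = 1 := left_eq_mul.mp (hcyz.eq ▸ hyz')
      exact htne this
    obtain ⟨i, hi2, hie⟩ := (Nat.dvd_prime_pow hp).mp hdvd
    have hile : i ≤ 1 := by
      rcases Nat.lt_or_ge i 2 with h | h
      · omega
      · exact absurd (hie.trans (by rw [Nat.le_antisymm hi2 h])) hne
    rw [hrange, hie]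
    calc p ^ i ≤ p ^ 1 := Nat.pow_le_pow_right hp.pos hile
      _ = p := pow_one p
  refine ⟨part1, ?_⟩
  -- t ≠ 1 : otherwise Q would be abelian of exponent p and order at most p^3
  have htne : t ≠ 1 := by
    intro ht1
    have hcomm : ∀ g h : Q, g * h = h * g := by
      intro g h
      obtain ⟨k, hk⟩ := Rall g h
      rw [hk, ht1, one_zpow, mul_one]
    letI : CommGroup Q := { (inferInstance : Group Q) with mul_comm := hcomm }
    have hxp1 : x ^ p = 1 := by rw [← htdef]; exact ht1
    have hform : ∀ g : Q, ∃ a b c : ℤ, g = x ^ a * y ^ b * z ^ c := by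
      intro g
      have hg : g ∈ Subgroup.closure ({x, y, z} : Set Q) := hgen ▸ Subgroup.mem_top g
      induction hg using Subgroup.closure_induction with
      | mem w hw =>
        rcases hw with h | h | h
        · exact ⟨1, 0, 0, by rw [h]; group⟩
        · exact ⟨0, 1, 0, by rw [h]; group⟩
        · exact ⟨0, 0, 1, by rw [h]; group⟩
      | one => exact ⟨0, 0, 0, by group⟩
      | mul a b _ _ ha hb =>
        obtain ⟨a1, b1, c1, h1⟩ := ha
        obtain ⟨a2, b2, c2, h2⟩ := hb
        refine ⟨a1 + a2, b1 + b2, c1 + c2, ?_⟩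
        rw [h1, h2, zpow_add, zpow_add, zpow_add]
        simp only [mul_assoc, mul_comm, mul_left_comm]
      | inv a _ ha =>
        obtain ⟨a1, b1, c1, h1⟩ := ha
        refine ⟨-a1, -b1, -c1, ?_⟩
        rw [h1, zpow_neg, zpow_neg, zpow_neg, mul_inv_rev, mul_inv_rev]
        simp only [mul_assoc, mul_comm, mul_left_comm]
    have hred : ∀ w : Q, w ^ p = 1 → ∀ m : ℤ, ∃ n : Fin p, w ^ m = w ^ (n : ℕ) := by
      intro w hw m
      have hp0 : (0 : ℤ) < p := by exact_mod_cast hp.pos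
      have h2 : 0 ≤ m % p := Int.emod_nonneg m (by omega)
      have h1 : m % p < p := Int.emod_lt_of_pos m hp0
      refine ⟨⟨(m % p).toNat, by omega⟩, ?_⟩
      have hsplit : w ^ m = w ^ (m % p) * (w ^ (p : ℤ)) ^ (m / p) := by
        rw [← zpow_mul, ← zpow_add, Int.emod_add_mul_ediv]
      rw [hsplit, show w ^ (p : ℤ) = 1 by rw [zpow_natCast, hw], one_zpow, mul_one]
      show w ^ (m % p) = w ^ ((m % p).toNat : ℕ)
      rw [← zpow_natCast w (m % p).toNat, Int.toNat_of_nonneg h2]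
    have hsurj : Function.Surjective
        (fun v : Fin p × Fin p × Fin p => x ^ (v.1 : ℕ) * y ^ (v.2.1 : ℕ) * z ^ (v.2.2 : ℕ)) := by
      intro g
      obtain ⟨a, b, c, hg⟩ := hform g
      obtain ⟨na, hna⟩ := hred x hxp1 a
      obtain ⟨nb, hnb⟩ := hred y hy b
      obtain ⟨nc, hnc⟩ := hred z hz c
      exact ⟨⟨na, nb, nc⟩, by rw [hg, hna, hnb, hnc]⟩
    have hle := Nat.card_le_card_of_surjective _ hsurj
    rw [hcard] at hle
    have hcp : Nat.card (Fin p × Fin p × Fin p) = p ^ 3 := by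
      simp only [Nat.card_eq_fintype_card, Fintype.card_prod, Fintype.card_fin]
      ring
    rw [hcp] at hle
    have hlt : p ^ 3 < p ^ 4 := Nat.pow_lt_pow_right hp.one_lt (by omega)
    omega
  have hordt : orderOf t = p := orderOf_eq_prime htp1 htne
  have hzne : z ≠ 1 := by
    intro h
    apply htne
    rw [← hyz, h]
    simp [pcomm]
  have hordz : orderOf z = p := orderOf_eq_prime hz hzne
  have hzp : z ^ (p : ℤ) = 1 := by rw [zpow_natCast, hz]
  have hzy : z * y = y * z * t⁻¹ := by rw [hyz']; group
  have htinv : ∀ g : Q, t⁻¹ * g = g * t⁻¹ := fun g => ((htg g).inv_left).eq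
  have hyzinv : y * z⁻¹ = z⁻¹ * y * t⁻¹ := by
    calc y * z⁻¹ = z⁻¹ * (z * y) * z⁻¹ := by group
      _ = z⁻¹ * (y * z * t⁻¹) * z⁻¹ := by rw [hzy]
      _ = z⁻¹ * y * z * (t⁻¹ * z⁻¹) := by group
      _ = z⁻¹ * y * z * (z⁻¹ * t⁻¹) := by rw [htinv]
      _ = z⁻¹ * y * t⁻¹ := by group
  have hyzm : ∀ m : ℤ, y * z ^ m = z ^ m * y * t ^ m := by
    intro m
    induction m using Int.induction_on with
    | zero => simp
    | succ i ih =>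
      calc y * z ^ ((i : ℤ) + 1) = (y * z ^ (i : ℤ)) * z := by rw [zpow_add_one]; group
        _ = (z ^ (i : ℤ) * y * t ^ (i : ℤ)) * z := by rw [ih]
        _ = z ^ (i : ℤ) * y * (t ^ (i : ℤ) * z) := by group
        _ = z ^ (i : ℤ) * y * (z * t ^ (i : ℤ)) := by rw [htq]
        _ = z ^ (i : ℤ) * (y * z) * t ^ (i : ℤ) := by group
        _ = z ^ (i : ℤ) * (z * y * t) * t ^ (i : ℤ) := by rw [hyz']
        _ = z ^ ((i : ℤ) + 1) * y * t ^ ((i : ℤ) + 1) := by group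
    | pred i ih =>
      calc y * z ^ (-(i : ℤ) - 1) = (y * z ^ (-(i : ℤ))) * z⁻¹ := by rw [zpow_sub_one]; group
        _ = (z ^ (-(i : ℤ)) * y * t ^ (-(i : ℤ))) * z⁻¹ := by rw [ih]
        _ = z ^ (-(i : ℤ)) * y * (t ^ (-(i : ℤ)) * z⁻¹) := by group
        _ = z ^ (-(i : ℤ)) * y * (z⁻¹ * t ^ (-(i : ℤ))) := by rw [htq]
        _ = z ^ (-(i : ℤ)) * (y * z⁻¹) * t ^ (-(i : ℤ)) := by group
        _ = z ^ (-(i : ℤ)) * (z⁻¹ * y * t⁻¹) * t ^ (-(i : ℤ)) := by rw [hyzinv]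
        _ = z ^ (-(i : ℤ) - 1) * y * t ^ (-(i : ℤ) - 1) := by group
  set S : Subgroup Q := Subgroup.zpowers z with hS
  have hzpm : ∀ m : ℤ, (p : ℤ) ∣ m → z ^ m = 1 := by
    rintro m ⟨e, he⟩
    rw [he, zpow_mul, hzp, one_zpow]
  have htnotS : t ∉ S := by
    intro htS
    obtain ⟨m, hm⟩ := Subgroup.mem_zpowers_iff.mp htS
    have h1 := hyzm m
    rw [hm] at h1
    rw [← (htg y).eq] at h1
    have h3 : t ^ m = 1 := left_eq_mul.mp h1
    have h4 : (p : ℤ) ∣ m := by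
      have h5 := orderOf_dvd_iff_zpow_eq_one.mpr h3
      rwa [hordt] at h5
    exact htne (by rw [← hm]; exact hzpm m h4)
  have hcore : S.normalCore = ⊥ := by
    rw [eq_bot_iff]
    intro g hg
    have hgS : g ∈ S := S.normalCore_le hg
    obtain ⟨k, hk⟩ := Subgroup.mem_zpowers_iff.mp hgS
    rw [Subgroup.mem_bot]
    by_contra hg1
    have hkp : ¬ ((p : ℤ) ∣ k) := fun hd => hg1 (by rw [← hk]; exact hzpm k hd)
    have hconj : y⁻¹ * g * y ∈ S := by
      have h5 : y⁻¹ * g * (y⁻¹)⁻¹ ∈ S.normalCore :=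
        (Subgroup.normalCore_normal S).conj_mem g hg y⁻¹
      rw [inv_inv] at h5
      exact S.normalCore_le h5
    have h6 : y⁻¹ * g * y = z ^ k * t ^ (-k) := by
      rw [← hk]
      have h7 : z ^ k * y = y * z ^ k * t ^ (-k) := by
        rw [hyzm k]; group
      calc y⁻¹ * z ^ k * y = y⁻¹ * (z ^ k * y) := by group
        _ = y⁻¹ * (y * z ^ k * t ^ (-k)) := by rw [h7]
        _ = z ^ k * t ^ (-k) := by group
    rw [h6] at hconj
    have h8 : t ^ (-k) ∈ S := by
      have h9 : t ^ (-k) = (z ^ k)⁻¹ * (z ^ k * t ^ (-k)) := by group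
      rw [h9]
      exact S.mul_mem (S.inv_mem (Subgroup.mem_zpowers_iff.mpr ⟨k, rfl⟩)) hconj
    have h10 : t ^ (-k) ≠ 1 := by
      intro h11
      apply hkp
      have h12 := orderOf_dvd_iff_zpow_eq_one.mpr h11
      rw [hordt] at h12
      exact dvd_neg.mp h12
    exact htnotS (Subgroup.zpowers_le.mpr h8 (bezout_mem hp hordt h10))
  haveI hfin : Finite (Q ⧸ S) := Quotient.finite _
  have hcardQS : Nat.card (Q ⧸ S) = p ^ 3 := by
    have h0 := Subgroup.card_eq_card_quotient_mul_card_subgroup S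
    rw [Nat.card_zpowers, hordz, hcard] at h0
    exact Nat.eq_of_mul_eq_mul_right hp.pos (h0.symm.trans (by ring))
  have e := Finite.equivFinOfCardEq hcardQS
  have hinj0 : Function.Injective (MulAction.toPermHom Q (Q ⧸ S)) := by
    rw [← MonoidHom.ker_eq_bot_iff, ← Subgroup.normalCore_eq_ker]
    exact hcore
  have hmem : p ^ 3 ∈ {n : ℕ | ∃ f : Q →* Equiv.Perm (Fin n), Function.Injective f} := by
    refine ⟨(Equiv.Perm.viaEmbeddingHom e.toEmbedding).comp (MulAction.toPermHom Q (Q ⧸ S)), ?_⟩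
    exact (Equiv.Perm.viaEmbeddingHom_injective e.toEmbedding).comp hinj0
  have hlb : ∀ n ∈ {n : ℕ | ∃ f : Q →* Equiv.Perm (Fin n), Function.Injective f}, p ^ 3 ≤ n := by
    rintro n ⟨f, hf⟩
    letI : MulAction Q (Fin n) := MulAction.compHom _ f
    have hft : f t ≠ 1 := fun h => htne (hf (by rw [h, map_one]))
    have hpt : ∃ a : Fin n, f t a ≠ a := by
      by_contra hno
      push_neg at hno
      exact hft (Equiv.ext fun a => hno a)
    obtain ⟨a, ha⟩ := hpt
    have hstab : t ∉ MulAction.stabilizer Q a := by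
      intro hs
      exact ha (by simpa [MulAction.mem_stabilizer_iff, MulAction.compHom_smul_def,
        Equiv.Perm.smul_def] using hs)
    have hsle : Nat.card (MulAction.stabilizer Q a) ≤ p := part1 _ hstab
    have horb := Nat.card_congr (MulAction.orbitProdStabilizerEquivGroup Q a)
    rw [Nat.card_prod, hcard] at horb
    have horble : Nat.card (MulAction.orbit Q a) ≤ n := by
      have h1 : Nat.card (MulAction.orbit Q a) ≤ Nat.card (Fin n) :=
        Nat.card_le_card_of_injective _ Subtype.val_injective
      simpa using h1
    have hkey : p ^ 3 * p ≤ Nat.card (MulAction.orbit Q a) * p := by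
      calc p ^ 3 * p = p ^ 4 := by ring
        _ = Nat.card (MulAction.orbit Q a) * Nat.card (MulAction.stabilizer Q a) := horb.symm
        _ ≤ Nat.card (MulAction.orbit Q a) * p :=
          Nat.mul_le_mul_left _ hsle
    have h2 := Nat.le_of_mul_le_mul_right hkey hp.pos
    omega
  have hdef : minFaithfulDegree Q
      = sInf {n : ℕ | ∃ f : Q →* Equiv.Perm (Fin n), Function.Injective f} := rfl
  rw [hdef]
  exact le_antisymm (Nat.sInf_le hmem) (le_csInf ⟨_, hmem⟩ hlb)
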